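/- arXiv:2411.12931 — 2 statements merged into one kernel-verified Lean document; each statement's English description precedes it below -/
import Mathlib

section
/- (Lipschitz summation formula) Let k ∈ ℂ with Re(k) > 1, let z be in the upper half-plane, and let x ∈ ℝ. Then Σ_{n∈ℤ} e^{2πinx} (z+n)^{−k} = ((−2πi)^k / Γ(k)) · Σ_{r ∈ ℤ−x, r>0} r^{k−1} e^{2πirz}, with the principal branch of the complex power. -/
open Complex

section LipschitzAuxSection

open Complex MeasureTheory Set Filter

noncomputable section

namespace LipAux

lemma integrableOn_rpow_mul_exp_neg {s : ℝ} (hs : 0 < s) {r : ℝ} (hr : 0 < r) :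
    IntegrableOn (fun t : ℝ => t ^ (s - 1) * Real.exp (-(r * t))) (Ioi 0) := by
  have h := Real.GammaIntegral_convergent hs
  rw [← mul_zero r, ← integrableOn_Ioi_comp_mul_left_iff
      (fun x : ℝ => Real.exp (-x) * x ^ (s - 1)) 0 hr] at h
  refine IntegrableOn.congr_fun (h.const_mul ((r ^ (s-1))⁻¹)) (fun t ht => ?_) measurableSet_Ioi
  simp only [mem_Ioi] at ht
  rw [Real.mul_rpow hr.le ht.le]
  field_simp [(Real.rpow_pos_of_pos hr (s-1)).ne']

end LipAux

namespace LipAux2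
open LipAux

lemma norm_integrand {k : ℂ} {t : ℝ} (ht : 0 < t) (c : ℂ) :
    ‖(t : ℂ) ^ (k - 1) * Complex.exp (-(c * t))‖
      = t ^ (k.re - 1) * Real.exp (-(c.re * t)) := by
  rw [norm_mul, Complex.norm_cpow_eq_rpow_re_of_pos ht, Complex.norm_exp]
  simp [Complex.sub_re, Complex.neg_re, Complex.mul_re]

lemma aesm_integrand (k c : ℂ) :
    AEStronglyMeasurable (fun t : ℝ => (t : ℂ) ^ (k - 1) * Complex.exp (-(c * t)))
      (volume.restrict (Ioi 0)) := by
  apply ContinuousOn.aestronglyMeasurable ?_ measurableSet_Ioi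
  apply ContinuousOn.mul
  · exact ContinuousOn.cpow Complex.continuous_ofReal.continuousOn continuousOn_const
      (fun t ht => Or.inl (by simpa using ht))
  · exact (Complex.continuous_exp.comp ((continuous_const.mul
      Complex.continuous_ofReal).neg)).continuousOn

lemma integrable_integrand {k c : ℂ} (hk : 0 < k.re) (hc : 0 < c.re) :
    IntegrableOn (fun t : ℝ => (t : ℂ) ^ (k - 1) * Complex.exp (-(c * t))) (Ioi 0) := by
  apply Integrable.mono' (integrableOn_rpow_mul_exp_neg hk hc) (aesm_integrand k c)
  filter_upwards [ae_restrict_mem measurableSet_Ioi] with t ht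
  rw [norm_integrand ht]

lemma key_integral {k : ℂ} (hk : 0 < k.re) :
    ∀ {c : ℂ}, 0 < c.re →
      ∫ t : ℝ in Ioi 0, (t : ℂ) ^ (k - 1) * Complex.exp (-(c * t))
        = Complex.Gamma k * c ^ (-k) := by
  set U : Set ℂ := {c | 0 < c.re} with hU
  have hUopen : IsOpen U := isOpen_lt continuous_const continuous_re
  have hUconn : IsPreconnected U := (convex_halfSpace_re_gt 0).isPreconnected
  set f : ℂ → ℂ := fun c => ∫ t : ℝ in Ioi 0, (t : ℂ) ^ (k - 1) * Complex.exp (-(c * t))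
    with hf_def
  set g : ℂ → ℂ := fun c => Complex.Gamma k * c ^ (-k) with hg_def
  have real_case : ∀ r : ℝ, 0 < r → f r = g r := by
    intro r hr
    have h1 := integral_cpow_mul_exp_neg_mul_Ioi hk hr
    have h2 : f r = (1 / (r : ℂ)) ^ k * Complex.Gamma k := by
      rw [hf_def, ← h1]
    rw [h2, hg_def, one_div, Complex.inv_cpow _ _
      (by rw [Complex.arg_ofReal_of_nonneg hr.le]; positivity),
      ← Complex.cpow_neg, mul_comm]
  have hf : AnalyticOnNhd ℂ f U := by
    apply DifferentiableOn.analyticOnNhd ?_ hUopen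
    intro c hc
    apply DifferentiableAt.differentiableWithinAt
    have hc' : 0 < c.re := hc
    have key := hasDerivAt_integral_of_dominated_loc_of_deriv_le
      (F := fun (c' : ℂ) (t : ℝ) => (t : ℂ) ^ (k - 1) * Complex.exp (-(c' * t)))
      (F' := fun (c' : ℂ) (t : ℝ) =>
        (t : ℂ) ^ (k - 1) * (Complex.exp (-(c' * t)) * (-(t : ℂ))))
      (μ := volume.restrict (Ioi 0)) (x₀ := c)
      (bound := fun t : ℝ => t ^ ((k.re + 1) - 1) * Real.exp (-((c.re / 2) * t)))
      (s := Metric.ball c (c.re / 2)) (Metric.ball_mem_nhds _ (by positivity))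
      (Filter.Eventually.of_forall fun c' => aesm_integrand k c')
      (integrable_integrand hk hc') ?_ ?_ ?_ ?_
    · exact key.2.differentiableAt
    · -- measurability of F' c
      apply ContinuousOn.aestronglyMeasurable ?_ measurableSet_Ioi
      apply ContinuousOn.mul
      · exact ContinuousOn.cpow Complex.continuous_ofReal.continuousOn continuousOn_const
          (fun t ht => Or.inl (by simpa using ht))
      · exact ((Complex.continuous_exp.comp ((continuous_const.mul
          Complex.continuous_ofReal).neg)).mul
          Complex.continuous_ofReal.neg).continuousOn
    · -- bound
      filter_upwards [ae_restrict_mem measurableSet_Ioi] with t ht c' hc'ball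
      have hre : c.re / 2 ≤ c'.re := by
        have h1 : |c'.re - c.re| ≤ ‖c' - c‖ := by
          rw [← Complex.sub_re]; exact Complex.abs_re_le_norm _
        have h2 : ‖c' - c‖ < c.re / 2 := by
          rwa [Metric.mem_ball, Complex.dist_eq] at hc'ball
        have := (abs_lt.mp (h1.trans_lt h2)).1
        linarith
      have ht0 : (0:ℝ) < t := ht
      have hnorm : ‖(t : ℂ) ^ (k - 1) * (Complex.exp (-(c' * t)) * (-(t : ℂ)))‖
          = t ^ (k.re - 1) * (Real.exp (-(c'.re * t)) * t) := by
        rw [norm_mul, norm_mul,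
          Complex.norm_cpow_eq_rpow_re_of_pos ht0, Complex.norm_exp,
          norm_neg, Complex.norm_real, Real.norm_eq_abs, abs_of_pos ht0]
        simp [Complex.sub_re, Complex.neg_re, Complex.mul_re]
      rw [hnorm, show k.re + 1 - 1 = (k.re - 1) + 1 by ring,
        Real.rpow_add_one ht0.ne']
      have hexp : Real.exp (-(c'.re * t)) ≤ Real.exp (-(c.re / 2 * t)) := by
        apply Real.exp_le_exp.mpr
        nlinarith
      calc t ^ (k.re - 1) * (Real.exp (-(c'.re * t)) * t)
          ≤ t ^ (k.re - 1) * (Real.exp (-(c.re / 2 * t)) * t) := by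
            apply mul_le_mul_of_nonneg_left ?_ (Real.rpow_nonneg ht0.le _)
            exact mul_le_mul_of_nonneg_right hexp ht0.le
        _ = t ^ (k.re - 1) * t * Real.exp (-(c.re / 2 * t)) := by ring
    · exact (integrableOn_rpow_mul_exp_neg (by linarith) (by positivity))
    · -- differentiability
      filter_upwards [ae_restrict_mem measurableSet_Ioi] with t ht c' _
      have h1 : HasDerivAt (fun c' : ℂ => -(c' * t)) (-(t : ℂ)) c' :=
        ((hasDerivAt_id c').mul_const (t : ℂ)).neg.congr_deriv (by simp)
      exact ((h1.cexp).const_mul _)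
  have hg : AnalyticOnNhd ℂ g U := by
    apply DifferentiableOn.analyticOnNhd ?_ hUopen
    intro c hc
    apply DifferentiableAt.differentiableWithinAt
    exact (differentiableAt_const _).mul
      ((differentiableAt_id.cpow (differentiableAt_const _)) (Or.inl hc))
  have h1U : (1 : ℂ) ∈ U := by simp [hU]
  have hfreq : ∃ᶠ w in nhdsWithin 1 {(1:ℂ)}ᶜ, f w = g w := by
    set u : ℕ → ℂ := fun n => (((1 + ((n:ℝ)+1)⁻¹ : ℝ)) : ℂ) with hu
    have h0 : Tendsto (fun n : ℕ => ((n:ℝ)+1)⁻¹) atTop (nhds 0) :=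
      tendsto_inv_atTop_zero.comp (tendsto_atTop_add_const_right _ 1 tendsto_natCast_atTop_atTop)
    have htend : Tendsto u atTop (nhdsWithin 1 {(1:ℂ)}ᶜ) := by
      apply tendsto_nhdsWithin_of_tendsto_nhds_of_eventually_within
      · have : Tendsto (fun n : ℕ => ((1 + ((n:ℝ)+1)⁻¹ : ℝ))) atTop (nhds 1) := by
          simpa using tendsto_const_nhds.add h0
        have := (Complex.continuous_ofReal.tendsto (1:ℝ)).comp this
        exact this.congr (fun n => by simp [hu, Function.comp])
      · filter_upwards with n
        simp only [hu, Set.mem_compl_iff, Set.mem_singleton_iff]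
        intro h
        have : (1 + ((n:ℝ)+1)⁻¹ : ℝ) = 1 := by exact_mod_cast h
        have hn : ((n:ℝ)+1)⁻¹ > 0 := by positivity
        linarith
    exact htend.frequently (Filter.Frequently.of_forall fun n =>
      real_case _ (by positivity))
  intro c hc
  exact hf.eqOn_of_preconnected_of_frequently_eq hg hUconn h1U hfreq hc

end LipAux2

namespace Lip3
open Real LipAux LipAux2

-- the function to which we apply Poisson summation
def G (k z : ℂ) : ℝ → ℂ := fun t =>
  ((max t 0 : ℝ) : ℂ) ^ (k - 1) * Complex.exp (2 * Real.pi * Complex.I * t * z)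

variable {k z : ℂ} (hk : 1 < k.re) (hz : 0 < z.im)

include hk in
lemma G_cont : Continuous (G k z) := by
  apply Continuous.mul
  · rw [continuous_iff_continuousAt]
    intro t
    have h1 : ContinuousAt (fun w : ℂ => w ^ (k - 1)) ((max t 0 : ℝ) : ℂ) := by
      apply continuousAt_cpow_const_of_re_pos
      · left; simp [le_max_right]
      · simp only [Complex.sub_re, Complex.one_re]; linarith
    have h2 : ContinuousAt (fun t : ℝ => ((max t 0 : ℝ) : ℂ)) t := by fun_prop
    exact ContinuousAt.comp (x := t) h1 h2
  · exact Complex.continuous_exp.comp (by fun_prop)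

include hk in
lemma G_eq : G k z = Set.indicator (Set.Ioi (0:ℝ))
    (fun t => (t : ℂ) ^ (k - 1) * Complex.exp (2 * Real.pi * Complex.I * t * z)) := by
  funext t
  rcases lt_or_ge 0 t with ht | ht
  · rw [Set.indicator_of_mem (Set.mem_Ioi.mpr ht), G, max_eq_left ht.le]
  · rw [Set.indicator_of_notMem (by simpa using ht), G, max_eq_right ht]
    rw [Complex.ofReal_zero, Complex.zero_cpow, zero_mul]
    intro h
    apply_fun Complex.re at h
    simp only [Complex.sub_re, Complex.one_re, Complex.zero_re] at h
    linarith

include hk hz in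
lemma G_norm {t : ℝ} (ht : 0 < t) :
    ‖G k z t‖ = t ^ (k.re - 1) * Real.exp (-(2 * Real.pi * z.im) * t) := by
  rw [G, max_eq_left ht.le, norm_mul,
    Complex.norm_cpow_eq_rpow_re_of_pos ht, Complex.norm_exp]
  have h1 : (k - 1).re = k.re - 1 := by simp [Complex.sub_re]
  have h2 : (2 * (Real.pi:ℂ) * Complex.I * t * z).re = -(2 * Real.pi * z.im) * t := by
    simp only [Complex.mul_re, Complex.mul_im, Complex.ofReal_re,
      Complex.ofReal_im, Complex.I_re, Complex.I_im, Complex.re_ofNat, Complex.im_ofNat]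
    ring
  rw [h1, h2]

include hk hz in
lemma G_decay : (G k z) =O[Filter.cocompact ℝ] (fun t : ℝ => |t| ^ (-2 : ℝ)) := by
  rw [cocompact_eq_atBot_atTop, Asymptotics.isBigO_sup]
  constructor
  · have hev : G k z =ᶠ[Filter.atBot] 0 := by
      filter_upwards [Filter.eventually_lt_atBot 0] with t ht
      rw [G_eq hk, Set.indicator_of_notMem (by simpa using ht.le)]
      rfl
    exact hev.trans_isBigO (Asymptotics.isBigO_zero _ _)
  · have htend := tendsto_rpow_mul_exp_neg_mul_atTop_nhds_zero (k.re + 1)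
      (2 * Real.pi * z.im) (by positivity)
    have hev2 : ∀ᶠ t in Filter.atTop,
        t ^ (k.re + 1) * Real.exp (-(2 * Real.pi * z.im) * t) < 1 :=
      htend.eventually (gt_mem_nhds one_pos)
    apply Asymptotics.IsBigO.of_bound 1
    filter_upwards [Filter.eventually_gt_atTop 0, hev2] with t ht hlt
    rw [G_norm hk hz ht, Real.norm_eq_abs, _root_.abs_of_nonneg
      (Real.rpow_nonneg (abs_nonneg t) _), _root_.abs_of_pos ht, one_mul]
    have hsplit : t ^ (k.re - 1) = t ^ (k.re + 1) * t ^ (-2 : ℝ) := by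
      rw [← Real.rpow_add ht]; ring_nf
    calc t ^ (k.re - 1) * Real.exp (-(2 * Real.pi * z.im) * t)
        = (t ^ (k.re + 1) * Real.exp (-(2 * Real.pi * z.im) * t)) * t ^ (-2:ℝ) := by
          rw [hsplit]; ring
      _ ≤ 1 * t ^ (-2:ℝ) :=
          mul_le_mul_of_nonneg_right hlt.le (Real.rpow_nonneg ht.le _)
      _ = t ^ (-2:ℝ) := one_mul _

end Lip3

namespace Lip4
open Real LipAux LipAux2 Lip3

variable {k z : ℂ} (hk : 1 < k.re) (hz : 0 < z.im)

include hz in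
lemma re_pos (ξ : ℝ) : 0 < (2 * (Real.pi:ℂ) * Complex.I * ((ξ:ℂ) - z)).re := by
  have : (2 * (Real.pi:ℂ) * Complex.I * ((ξ:ℂ) - z)).re = 2 * Real.pi * z.im := by
    simp only [Complex.mul_re, Complex.mul_im, Complex.I_re, Complex.I_im, Complex.sub_re,
      Complex.sub_im, Complex.ofReal_re, Complex.ofReal_im, Complex.re_ofNat, Complex.im_ofNat]
    ring
  rw [this]
  positivity

include hk hz in
lemma G_fourier (ξ : ℝ) :
    FourierTransform.fourier (G k z) ξ
      = Complex.Gamma k * (2 * (Real.pi:ℂ) * Complex.I * ((ξ:ℂ) - z)) ^ (-k) := by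
  rw [Real.fourier_real_eq_integral_exp_smul]
  have heq : (fun v : ℝ => Complex.exp (↑(-2 * Real.pi * v * ξ) * Complex.I) • G k z v)
      = Set.indicator (Set.Ioi (0:ℝ)) (fun v => (v:ℂ) ^ (k - 1)
          * Complex.exp (-((2 * (Real.pi:ℂ) * Complex.I * ((ξ:ℂ) - z)) * v))) := by
    funext v
    rw [G_eq hk]
    rcases lt_or_ge 0 v with hv | hv
    · rw [Set.indicator_of_mem (Set.mem_Ioi.mpr hv), Set.indicator_of_mem (Set.mem_Ioi.mpr hv),
        smul_eq_mul, mul_comm, mul_assoc, ← Complex.exp_add]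
      congr 1
      push_cast
      ring
    · rw [Set.indicator_of_notMem (by simpa using hv),
        Set.indicator_of_notMem (by simpa using hv), smul_zero]
  rw [heq, MeasureTheory.integral_indicator measurableSet_Ioi]
  exact key_integral (by linarith) (re_pos hz ξ)

include hk hz in
lemma G_fourier_summable : Summable (fun n : ℤ => FourierTransform.fourier (G k z) n) := by
  apply summable_of_isBigO (Real.summable_abs_int_rpow hk)
  apply Asymptotics.IsBigO.of_bound
    (‖Complex.Gamma k‖ * Real.exp (Real.pi * |k.im|) * Real.pi ^ (-k.re))
  have hev : ∀ᶠ n : ℤ in Filter.cofinite, 2 * ‖z‖ + 1 ≤ |(n:ℝ)| := by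
    rw [Filter.eventually_cofinite]
    apply Set.Finite.subset (Set.finite_Icc (-(⌈2 * ‖z‖ + 1⌉)) ⌈2 * ‖z‖ + 1⌉)
    intro n hn
    simp only [Set.mem_setOf_eq, not_le] at hn
    have h1 : (n:ℝ) ≤ |(n:ℝ)| := le_abs_self _
    have h2 : -(n:ℝ) ≤ |(n:ℝ)| := neg_le_abs _
    have hceil := Int.le_ceil (2 * ‖z‖ + 1)
    constructor
    · have : -(2 * ‖z‖ + 1) < (n:ℝ) := by
        cases abs_lt.mp hn; linarith
      have : (-(⌈2 * ‖z‖ + 1⌉):ℝ) ≤ (n:ℝ) := by push_cast; linarith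
      exact_mod_cast this
    · have : (n:ℝ) < 2 * ‖z‖ + 1 := by
        cases abs_lt.mp hn; linarith
      have : (n:ℝ) ≤ (⌈2 * ‖z‖ + 1⌉:ℝ) := by linarith
      exact_mod_cast this
  filter_upwards [hev] with n hn
  have habsz : 0 ≤ ‖z‖ := norm_nonneg z
  have hn0 : (1:ℝ) ≤ |(n:ℝ)| := by linarith
  have hnz : (((n:ℝ)):ℂ) - z ≠ 0 := by
    intro h
    apply_fun Complex.im at h
    simp only [Complex.sub_im, Complex.ofReal_im, Complex.zero_im, zero_sub] at h
    linarith
  set c : ℂ := 2 * (Real.pi:ℂ) * Complex.I * ((((n:ℝ)):ℂ) - z) with hc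
  have hcne : c ≠ 0 := by
    apply mul_ne_zero ?_ hnz
    simp [Real.pi_ne_zero, Complex.I_ne_zero]
  have habs_c : ‖c‖ = 2 * Real.pi * ‖(((n:ℝ)):ℂ) - z‖ := by
    rw [hc, norm_mul, norm_mul, norm_mul]
    simp [Complex.norm_real, abs_of_pos Real.pi_pos]
  have hlow : Real.pi * |(n:ℝ)| ≤ ‖c‖ := by
    rw [habs_c]
    have h1 : |(n:ℝ)| - ‖z‖ ≤ ‖(((n:ℝ)):ℂ) - z‖ := by
      have := norm_sub_norm_le ((((n:ℝ)):ℂ)) z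
      simpa using this
    nlinarith [Real.pi_pos]
  rw [G_fourier hk hz, ← hc, norm_mul,
    Complex.norm_cpow_of_ne_zero hcne, Complex.neg_re, Complex.neg_im]
  have harg : |c.arg * k.im| ≤ Real.pi * |k.im| := by
    rw [abs_mul]
    exact mul_le_mul_of_nonneg_right (Complex.abs_arg_le_pi c) (abs_nonneg _)
  have hexp1 : (1:ℝ) ≤ Real.exp (Real.pi * |k.im|) * Real.exp (c.arg * -k.im) := by
    rw [← Real.exp_add]
    rw [show c.arg * -k.im = -(c.arg * k.im) by ring]
    apply Real.one_le_exp
    nlinarith [abs_le.mp harg]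
  have hstep : ‖c‖ ^ (-k.re) / Real.exp (c.arg * -k.im)
      ≤ ‖c‖ ^ (-k.re) * Real.exp (Real.pi * |k.im|) := by
    rw [div_le_iff₀ (Real.exp_pos _)]
    calc ‖c‖ ^ (-k.re) = ‖c‖ ^ (-k.re) * 1 := (mul_one _).symm
      _ ≤ ‖c‖ ^ (-k.re)
            * (Real.exp (Real.pi * |k.im|) * Real.exp (c.arg * -k.im)) :=
          mul_le_mul_of_nonneg_left hexp1 (Real.rpow_nonneg (norm_nonneg c) _)
      _ = ‖c‖ ^ (-k.re) * Real.exp (Real.pi * |k.im|)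
            * Real.exp (c.arg * -k.im) := by ring
  have h2 : ‖c‖ ^ (-k.re) ≤ Real.pi ^ (-k.re) * |(n:ℝ)| ^ (-k.re) := by
    rw [← Real.mul_rpow Real.pi_pos.le (abs_nonneg _)]
    apply Real.rpow_le_rpow_of_nonpos ?_ hlow (by linarith)
    positivity
  have hnorm_rpow : ‖|(n:ℝ)| ^ (-k.re)‖ = |(n:ℝ)| ^ (-k.re) := by
    rw [Real.norm_eq_abs, _root_.abs_of_nonneg (Real.rpow_nonneg (abs_nonneg _) _)]
  rw [hnorm_rpow]
  have habsG : (0:ℝ) ≤ ‖Complex.Gamma k‖ := norm_nonneg _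
  calc ‖Complex.Gamma k‖
        * (‖c‖ ^ (-k.re) / Real.exp (c.arg * -k.im))
      ≤ ‖Complex.Gamma k‖
        * (‖c‖ ^ (-k.re) * Real.exp (Real.pi * |k.im|)) :=
        mul_le_mul_of_nonneg_left hstep habsG
    _ ≤ ‖Complex.Gamma k‖
        * ((Real.pi ^ (-k.re) * |(n:ℝ)| ^ (-k.re)) * Real.exp (Real.pi * |k.im|)) := by
        apply mul_le_mul_of_nonneg_left ?_ habsG
        exact mul_le_mul_of_nonneg_right h2 (Real.exp_pos _).le
    _ = ‖Complex.Gamma k‖ * Real.exp (Real.pi * |k.im|) * Real.pi ^ (-k.re)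
        * |(n:ℝ)| ^ (-k.re) := by ring

end Lip4

namespace Lip5
open Real LipAux LipAux2 Lip3 Lip4

lemma mul_cpow_arg {a b : ℂ} (s : ℂ) (ha : a ≠ 0) (hb : b ≠ 0)
    (h : a.arg + b.arg ∈ Set.Ioc (-Real.pi) Real.pi) : (a * b) ^ s = a ^ s * b ^ s := by
  rw [Complex.cpow_def_of_ne_zero (mul_ne_zero ha hb), Complex.cpow_def_of_ne_zero ha,
    Complex.cpow_def_of_ne_zero hb, ← Complex.exp_add, ← add_mul,
    (Complex.log_mul_eq_add_log_iff ha hb).mpr h]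

theorem lipschitz_summation_formula' (k : ℂ) (hk : 1 < k.re)
    (z : ℂ) (hz : 0 < z.im) (x : ℝ) :
    ∑' n : ℤ, Complex.exp (2 * Real.pi * Complex.I * (n : ℂ) * (x : ℂ)) * (z + (n : ℂ)) ^ (-k)
      = ((-(2 * Real.pi * Complex.I)) ^ k / Complex.Gamma k) *
          ∑' n : {n : ℤ // x < (n : ℝ)},
            (((n : ℤ) : ℂ) - (x : ℂ)) ^ (k - 1) *
              Complex.exp (2 * Real.pi * Complex.I * (((n : ℤ) : ℂ) - (x : ℂ)) * z) := by
  have hk1ne : k - 1 ≠ 0 := by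
    intro h
    apply_fun Complex.re at h
    simp only [Complex.sub_re, Complex.one_re, Complex.zero_re] at h
    linarith
  have hbase : -(2 * (Real.pi:ℂ) * Complex.I) ≠ 0 := by
    apply neg_ne_zero.mpr
    apply mul_ne_zero (mul_ne_zero two_ne_zero ?_) Complex.I_ne_zero
    exact_mod_cast Real.pi_ne_zero
  have hGamma : Complex.Gamma k ≠ 0 := by
    apply Complex.Gamma_ne_zero
    intro m h
    apply_fun Complex.re at h
    simp only [Complex.neg_re, Complex.natCast_re] at h
    have : (0:ℝ) ≤ m := Nat.cast_nonneg m
    linarith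
  have hP := Real.tsum_eq_tsum_fourier_of_rpow_decay_of_summable
    (G_cont hk (z := z)) one_lt_two (G_decay hk hz) (G_fourier_summable hk hz) (-x)
  -- LHS of hP is the subtype sum
  have hLHS : ∑' n : ℤ, G k z (-x + n)
      = ∑' n : {n : ℤ // x < (n : ℝ)},
          (((n : ℤ) : ℂ) - (x : ℂ)) ^ (k - 1) *
            Complex.exp (2 * Real.pi * Complex.I * (((n : ℤ) : ℂ) - (x : ℂ)) * z) := by
    have hfun : (fun n : ℤ => G k z (-x + n))
        = Set.indicator {n : ℤ | x < (n : ℝ)}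
            (fun n : ℤ => ((n : ℂ) - (x : ℂ)) ^ (k - 1) *
              Complex.exp (2 * Real.pi * Complex.I * ((n : ℂ) - (x : ℂ)) * z)) := by
      funext n
      by_cases h : x < (n : ℝ)
      · rw [Set.indicator_of_mem (show n ∈ {n : ℤ | x < (n:ℝ)} from h), G, max_eq_left (by linarith : (0:ℝ) ≤ -x + n)]
        congr 2 <;> push_cast <;> ring
      · rw [Set.indicator_of_notMem (show n ∉ {n : ℤ | x < (n:ℝ)} from h), G,
          max_eq_right (by push_cast at h ⊢; linarith : -x + (n:ℝ) ≤ 0),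
          Complex.ofReal_zero, Complex.zero_cpow hk1ne, zero_mul]
    rw [hfun, ← tsum_subtype]
    rfl
  -- RHS of hP is (Γ k * (-(2πi))^(-k)) times the LHS of the goal
  have hRHS : ∑' n : ℤ, FourierTransform.fourier (G k z) n
        * fourier n ((-x : ℝ) : UnitAddCircle)
      = Complex.Gamma k * (-(2 * (Real.pi:ℂ) * Complex.I)) ^ (-k) *
          ∑' n : ℤ, Complex.exp (2 * Real.pi * Complex.I * (n : ℂ) * (x : ℂ))
            * (z + (n : ℂ)) ^ (-k) := by
    rw [← tsum_mul_left, ← (Equiv.neg ℤ).tsum_eq]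
    apply tsum_congr
    intro n
    simp only [Equiv.neg_apply]
    rw [G_fourier hk hz, fourier_coe_apply]
    have hcast : (((-n : ℤ) : ℝ) : ℂ) - z = (-(2 * (Real.pi:ℂ) * Complex.I))⁻¹
        * ((-(2 * (Real.pi:ℂ) * Complex.I)) * (-(z + (n:ℂ)))) := by
      rw [inv_mul_cancel_left₀ hbase]
      push_cast
      ring
    have hsplit : (2 * (Real.pi:ℂ) * Complex.I * ((((-n : ℤ) : ℝ) : ℂ) - z)) ^ (-k)
        = (-(2 * (Real.pi:ℂ) * Complex.I)) ^ (-k) * (z + (n:ℂ)) ^ (-k) := by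
      have h1 : 2 * (Real.pi:ℂ) * Complex.I * ((((-n : ℤ) : ℝ) : ℂ) - z)
          = (-(2 * (Real.pi:ℂ) * Complex.I)) * (z + (n:ℂ)) := by
        push_cast
        ring
      rw [h1]
      apply mul_cpow_arg _ hbase
      · intro h
        apply_fun Complex.im at h
        simp only [Complex.add_im, Complex.intCast_im, Complex.zero_im, add_zero] at h
        linarith
      · have harga : (-(2 * (Real.pi:ℂ) * Complex.I)).arg = -(Real.pi / 2) := by
          have heq : (-(2 * (Real.pi:ℂ) * Complex.I)) = ((2 * Real.pi : ℝ) : ℂ) * (-Complex.I) := by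
            push_cast
            ring
          rw [heq, Complex.arg_real_mul _ (by positivity), Complex.arg_neg_I]
        have hb_im : (z + (n:ℂ)).im = z.im := by
          simp [Complex.add_im]
        have hb0 : 0 ≤ (z + (n:ℂ)).arg := Complex.arg_nonneg_iff.mpr (by rw [hb_im]; linarith)
        have hb1 : (z + (n:ℂ)).arg ≤ Real.pi := Complex.arg_le_pi _
        constructor
        · rw [harga]
          have := Real.pi_pos
          linarith
        · rw [harga]
          linarith
    rw [hsplit]
    push_cast
    ring
  rw [hLHS, hRHS] at hP
  have hBk : (-(2 * (Real.pi:ℂ) * Complex.I)) ^ k ≠ 0 := by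
    simp [Complex.cpow_eq_zero_iff, hbase]
  rw [hP, Complex.cpow_neg]
  field_simp
  ring_nf
  exact tsum_congr fun n => by ring_nf

end Lip5
end
end LipschitzAuxSection

/-- Lipschitz summation formula: for `Re k > 1`, `z` in the upper half-plane and
`x ∈ ℝ`,
`∑_{n ∈ ℤ} e^{2πinx}(z+n)^{-k}
  = ((-2πi)^k / Γ(k)) ∑_{r ∈ ℤ - x, r > 0} r^{k-1} e^{2πirz}`. -/
theorem lipschitz_summation_formula (k : ℂ) (hk : 1 < k.re)
    (z : ℂ) (hz : 0 < z.im) (x : ℝ) :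
    ∑' n : ℤ, Complex.exp (2 * Real.pi * I * (n : ℂ) * (x : ℂ)) * (z + (n : ℂ)) ^ (-k)
      = ((-(2 * Real.pi * I)) ^ k / Complex.Gamma k) *
          ∑' n : {n : ℤ // x < (n : ℝ)},
            (((n : ℤ) : ℂ) - (x : ℂ)) ^ (k - 1) *
              Complex.exp (2 * Real.pi * I * (((n : ℤ) : ℂ) - (x : ℂ)) * z) :=
  Lip5.lipschitz_summation_formula' k hk z hz x
end

section
/- Let M = U ⊕ U(2) ⊕ A₁(−1)^{⊕m} and let u, v ∈ U(2) ⊕ A₁(−1)^{⊕m} ⊂ M be primitive vectors with u² = v², both of divisibility d (i.e. ⟨u,M⟩ = ⟨v,M⟩ = dℤ), and with (u−v)/d ∈ M. Suppose u', v' ∈ U(2) ⊕ A₁(−1)^{⊕m} satisfy ⟨u,u'⟩ = ⟨v,v'⟩ = d, and set w = (u−v)/d. Then the composition g = t(e₁, −v') ∘ t(f₁, w) ∘ t(e₁, u') of Eichler transvections (with e₁, f₁ the standard basis of U) is an isometry of M with g(u) = v. -/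
namespace Stmt14

/-- Index type of `M = U ⊕ U(2) ⊕ A₁(-1)^m`. -/
abbrev Idx (m : ℕ) := (Fin 2 ⊕ Fin 2) ⊕ Fin m

/-- The Gram matrix of `M = U ⊕ U(2) ⊕ A₁(-1)^m`. -/
def gram (m : ℕ) : Matrix (Idx m) (Idx m) ℤ :=
  Matrix.fromBlocks
    (Matrix.fromBlocks !![0, 1; 1, 0] 0 0 !![0, 2; 2, 0]) 0 0
    ((-2 : ℤ) • (1 : Matrix (Fin m) (Fin m) ℤ))

/-- The bilinear form of `M = U ⊕ U(2) ⊕ A₁(-1)^m`. -/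
def B (m : ℕ) (x y : Idx m → ℤ) : ℤ :=
  dotProduct x ((gram m).mulVec y)

def e₁ (m : ℕ) : Idx m → ℤ := Pi.single (Sum.inl (Sum.inl 0)) 1
def f₁ (m : ℕ) : Idx m → ℤ := Pi.single (Sum.inl (Sum.inl 1)) 1

/-- The Eichler transvection
`t(x,y)(ν) = ν - ⟨y,ν⟩x + ⟨x,ν⟩y - (⟨x,ν⟩⟨y,y⟩/2)x`. -/
def eichler (m : ℕ) (x y ν : Idx m → ℤ) : Idx m → ℤ :=
  ν - B m y ν • x + B m x ν • y - (B m x ν * (B m y y / 2)) • x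

lemma B_apply (m : ℕ) (x y : Idx m → ℤ) : B m x y =
    x (Sum.inl (Sum.inl 0)) * y (Sum.inl (Sum.inl 1))
  + x (Sum.inl (Sum.inl 1)) * y (Sum.inl (Sum.inl 0))
  + 2 * (x (Sum.inl (Sum.inr 0)) * y (Sum.inl (Sum.inr 1)))
  + 2 * (x (Sum.inl (Sum.inr 1)) * y (Sum.inl (Sum.inr 0)))
  + ∑ k : Fin m, (-2) * (x (Sum.inr k) * y (Sum.inr k)) := by
  simp only [B, gram, dotProduct, Matrix.mulVec, Fintype.sum_sum_type,
    Fin.sum_univ_two, Matrix.fromBlocks, Matrix.of_apply, Sum.elim_inl, Sum.elim_inr,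
    Matrix.smul_apply, Matrix.one_apply, Matrix.zero_apply, Matrix.cons_val', Matrix.cons_val_zero,
    Matrix.cons_val_one, Matrix.head_cons, Matrix.empty_val', Matrix.cons_val_fin_one,
    Matrix.head_fin_const, smul_eq_mul]
  simp [mul_ite, ite_mul, Finset.sum_ite_eq, Finset.sum_ite_eq']
  ring_nf

lemma B_symm (m : ℕ) (x y : Idx m → ℤ) : B m x y = B m y x := by
  rw [B_apply, B_apply]
  have : ∀ z z' : Idx m → ℤ, ∑ k : Fin m, (-2) * (z (Sum.inr k) * z' (Sum.inr k))
      = ∑ k : Fin m, (-2) * (z' (Sum.inr k) * z (Sum.inr k)) := fun z z' =>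
    Finset.sum_congr rfl (fun k _ => by ring)
  rw [this x y]; ring

lemma B_add_left (m : ℕ) (x y z : Idx m → ℤ) : B m (x + y) z = B m x z + B m y z := by
  simp [B, add_dotProduct]
lemma B_add_right (m : ℕ) (x y z : Idx m → ℤ) : B m x (y + z) = B m x y + B m x z := by
  simp [B, Matrix.mulVec_add, dotProduct_add]
lemma B_smul_left (m : ℕ) (c : ℤ) (x y : Idx m → ℤ) : B m (c • x) y = c * B m x y := by
  rw [B, B, smul_dotProduct, smul_eq_mul]
lemma B_smul_right (m : ℕ) (c : ℤ) (x y : Idx m → ℤ) : B m x (c • y) = c * B m x y := by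
  rw [B, B, Matrix.mulVec_smul, dotProduct_smul, smul_eq_mul]
lemma B_sub_left (m : ℕ) (x y z : Idx m → ℤ) : B m (x - y) z = B m x z - B m y z := by
  have := B_add_left m x (-y) z
  have h := B_smul_left m (-1) y z
  simp at h
  simpa [sub_eq_add_neg, h] using this
lemma B_sub_right (m : ℕ) (x y z : Idx m → ℤ) : B m x (y - z) = B m x y - B m x z := by
  have := B_add_right m x y (-z)
  have h := B_smul_right m (-1) x z
  simp at h
  simpa [sub_eq_add_neg, h] using this
lemma B_neg_left (m : ℕ) (x y : Idx m → ℤ) : B m (-x) y = -B m x y := by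
  have h := B_smul_left m (-1) x y; simpa using h
lemma B_neg_right (m : ℕ) (x y : Idx m → ℤ) : B m x (-y) = -B m x y := by
  have h := B_smul_right m (-1) x y; simpa using h

lemma B_even (m : ℕ) (x : Idx m → ℤ) :
    2 * (B m x x / 2) = B m x x := by
  have h : B m x x = 2 * (x (Sum.inl (Sum.inl 0)) * x (Sum.inl (Sum.inl 1))
      + 2 * (x (Sum.inl (Sum.inr 0)) * x (Sum.inl (Sum.inr 1)))
      + ∑ k : Fin m, -(x (Sum.inr k) * x (Sum.inr k))) := by
    rw [B_apply]
    rw [show ∑ k : Fin m, (-2) * (x (Sum.inr k) * x (Sum.inr k))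
        = 2 * ∑ k : Fin m, -(x (Sum.inr k) * x (Sum.inr k)) by
      rw [Finset.mul_sum]; exact Finset.sum_congr rfl (fun k _ => by ring)]
    ring
  rw [h]
  omega

lemma B_e₁ (m : ℕ) (ν : Idx m → ℤ) : B m (e₁ m) ν = ν (Sum.inl (Sum.inl 1)) := by
  rw [B_apply]
  simp [e₁, Pi.single_apply]

lemma B_f₁ (m : ℕ) (ν : Idx m → ℤ) : B m (f₁ m) ν = ν (Sum.inl (Sum.inl 0)) := by
  rw [B_apply]
  simp [f₁, Pi.single_apply]

lemma eichler_eq (m : ℕ) (x y ν : Idx m → ℤ) :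
    eichler m x y ν = ν + (-(B m y ν) - B m x ν * (B m y y / 2)) • x + B m x ν • y := by
  funext i
  simp [eichler, Pi.smul_apply, smul_eq_mul]
  ring

lemma eichler_isom (m : ℕ) (x y : Idx m → ℤ) (hx : B m x x = 0) (hxy : B m x y = 0)
    (ν μ : Idx m → ℤ) : B m (eichler m x y ν) (eichler m x y μ) = B m ν μ := by
  have hyx : B m y x = 0 := by rw [← B_symm]; exact hxy
  have h2 := B_even m y
  rw [eichler_eq, eichler_eq]
  simp only [B_add_left, B_add_right, B_smul_left, B_smul_right, hx, hxy, hyx]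
  rw [B_symm m x ν, B_symm m y ν, B_symm m x μ, B_symm m y μ] at *
  ring_nf
  linear_combination (-(B m ν x * B m μ x)) * h2

lemma eichler_left_inv (m : ℕ) (x y : Idx m → ℤ) (hx : B m x x = 0) (hxy : B m x y = 0)
    (ν : Idx m → ℤ) : eichler m x y (eichler m x (-y) ν) = ν := by
  have hyx : B m y x = 0 := by rw [← B_symm]; exact hxy
  have h2 := B_even m y
  rw [eichler_eq, eichler_eq]
  simp only [B_add_left, B_add_right, B_smul_left, B_smul_right, B_neg_left, B_neg_right,
    hx, hxy, hyx, mul_zero, zero_mul, neg_zero, add_zero, zero_add, smul_zero, neg_neg]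
  funext i
  simp only [Pi.add_apply, Pi.smul_apply, Pi.neg_apply, smul_eq_mul]
  ring_nf
  linear_combination (-(B m x ν * x i)) * h2


lemma eichler_right_inv (m : ℕ) (x y : Idx m → ℤ) (hx : B m x x = 0) (hxy : B m x y = 0)
    (ν : Idx m → ℤ) : eichler m x (-y) (eichler m x y ν) = ν := by
  have h := eichler_left_inv m x (-y) hx (by rw [B_neg_right, hxy, neg_zero]) ν
  rwa [neg_neg] at h

lemma eichler_bij (m : ℕ) (x y : Idx m → ℤ) (hx : B m x x = 0) (hxy : B m x y = 0) :
    Function.Bijective (eichler m x y) :=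
  Function.bijective_iff_has_inverse.mpr
    ⟨eichler m x (-y), fun ν => eichler_right_inv m x y hx hxy ν,
      fun ν => eichler_left_inv m x y hx hxy ν⟩


/-- In `M = U ⊕ U(2) ⊕ A₁(-1)^m`, for primitive `u, v ∈ U(2) ⊕ A₁(-1)^m` of the
same norm and the same divisibility `d` with `w = (u-v)/d ∈ M`, and
`u', v' ∈ U(2) ⊕ A₁(-1)^m` with `⟨u,u'⟩ = ⟨v,v'⟩ = d`, the composition
`g = t(e₁,-v') ∘ t(f₁,w) ∘ t(e₁,u')` of Eichler transvections is an isometry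
of `M` with `g(u) = v`. -/
theorem eichler_composition_maps_u_to_v
    (m : ℕ) (d : ℤ) (hd : 0 < d)
    (u v u' v' w : Idx m → ℤ)
    -- `u, v, u', v'` lie in `U(2) ⊕ A₁(-1)^m`
    (hu0 : ∀ k : Fin 2, u (Sum.inl (Sum.inl k)) = 0)
    (hv0 : ∀ k : Fin 2, v (Sum.inl (Sum.inl k)) = 0)
    (hu'0 : ∀ k : Fin 2, u' (Sum.inl (Sum.inl k)) = 0)
    (hv'0 : ∀ k : Fin 2, v' (Sum.inl (Sum.inl k)) = 0)
    -- `u, v` are primitive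
    (hupr : ∀ (z : Idx m → ℤ) (c : ℤ), u = c • z → IsUnit c)
    (hvpr : ∀ (z : Idx m → ℤ) (c : ℤ), v = c • z → IsUnit c)
    -- `u² = v²`
    (huv : B m u u = B m v v)
    -- `u` and `v` both have divisibility `d`
    (hdu : (∀ z : Idx m → ℤ, d ∣ B m u z) ∧ ∃ z : Idx m → ℤ, B m u z = d)
    (hdv : (∀ z : Idx m → ℤ, d ∣ B m v z) ∧ ∃ z : Idx m → ℤ, B m v z = d)
    -- `w = (u - v)/d ∈ M`
    (hw : ∀ i, d * w i = u i - v i)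
    -- `⟨u,u'⟩ = ⟨v,v'⟩ = d`
    (huu' : B m u u' = d) (hvv' : B m v v' = d) :
    (∀ ν μ : Idx m → ℤ,
      B m ((eichler m (e₁ m) (-v') ∘ eichler m (f₁ m) w ∘ eichler m (e₁ m) u') ν)
          ((eichler m (e₁ m) (-v') ∘ eichler m (f₁ m) w ∘ eichler m (e₁ m) u') μ)
        = B m ν μ) ∧
    Function.Bijective
      (eichler m (e₁ m) (-v') ∘ eichler m (f₁ m) w ∘ eichler m (e₁ m) u') ∧
    (eichler m (e₁ m) (-v') ∘ eichler m (f₁ m) w ∘ eichler m (e₁ m) u') u = v := by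
  have hdne : d ≠ 0 := ne_of_gt hd
  have hw0 : ∀ k : Fin 2, w (Sum.inl (Sum.inl k)) = 0 := by
    intro k
    have := hw (Sum.inl (Sum.inl k))
    rw [hu0 k, hv0 k] at this
    have : d * w (Sum.inl (Sum.inl k)) = 0 := by linarith
    rcases mul_eq_zero.mp this with h | h
    · exact absurd h hdne
    · exact h
  have hdw : d • w = u - v := by
    funext i
    simp [Pi.smul_apply, smul_eq_mul, hw i]
  have hBee : B m (e₁ m) (e₁ m) = 0 := by
    rw [B_e₁]; simp [e₁, Pi.single_apply]
  have hBff : B m (f₁ m) (f₁ m) = 0 := by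
    rw [B_f₁]; simp [f₁, Pi.single_apply]
  have hBe₁u' : B m (e₁ m) u' = 0 := by rw [B_e₁]; exact hu'0 1
  have hBe₁v' : B m (e₁ m) (-v') = 0 := by
    rw [B_neg_right, B_e₁, hv'0 1, neg_zero]
  have hBf₁w : B m (f₁ m) w = 0 := by rw [B_f₁]; exact hw0 0
  refine ⟨?_, ?_, ?_⟩
  · intro ν μ
    simp only [Function.comp_apply]
    rw [eichler_isom m (e₁ m) (-v') hBee hBe₁v',
        eichler_isom m (f₁ m) w hBff hBf₁w,
        eichler_isom m (e₁ m) u' hBee hBe₁u']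
  · exact (eichler_bij m (e₁ m) (-v') hBee hBe₁v').comp
      ((eichler_bij m (f₁ m) w hBff hBf₁w).comp
        (eichler_bij m (e₁ m) u' hBee hBe₁u'))
  · -- the computation
    have step1 : eichler m (e₁ m) u' u = u - d • e₁ m := by
      have h1 : B m u' u = d := by rw [B_symm]; exact huu'
      have h2 : B m (e₁ m) u = 0 := by rw [B_e₁]; exact hu0 1
      rw [eichler, h1, h2]
      simp
    have hBwu : d * B m w u = B m u u - B m v u := by
      rw [← B_smul_left, hdw, B_sub_left]
    have hBww : d * (d * B m w w) = 2 * (B m u u - B m v u) := by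
      rw [← B_smul_right, ← B_smul_left, hdw, B_sub_left, B_sub_right, B_sub_right]
      linarith [B_symm m u v, huv]
    have hkey : d * (B m w w / 2) = B m w u := by
      have h2 := B_even m w
      apply mul_left_cancel₀ hdne
      have : d * (d * (2 * (B m w w / 2))) = 2 * (d * (d * (B m w w / 2))) := by ring
      rw [h2] at this
      rw [hBww] at this
      linarith [hBwu, this]
    have step2 : eichler m (f₁ m) w (u - d • e₁ m) = v - d • e₁ m := by
      have ha : B m (f₁ m) (u - d • e₁ m) = -d := by
        rw [B_f₁]
        simp [Pi.sub_apply, Pi.smul_apply, e₁, Pi.single_apply, hu0 0]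
      have hb : B m w (u - d • e₁ m) = B m w u := by
        rw [B_sub_right, B_smul_right]
        have : B m w (e₁ m) = 0 := by
          rw [B_symm, B_e₁]; exact hw0 1
        rw [this]; ring
      rw [eichler, ha, hb]
      have hc : -d * (B m w w / 2) = -(B m w u) := by linarith [hkey]
      rw [hc]
      funext i
      simp only [Pi.sub_apply, Pi.add_apply, Pi.smul_apply, Pi.neg_apply, smul_eq_mul,
        neg_smul, neg_neg, neg_mul]
      have := hw i
      ring_nf
      linarith [hw i]
    have step3 : eichler m (e₁ m) (-v') (v - d • e₁ m) = v := by
      have ha : B m (-v') (v - d • e₁ m) = -d := by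
        rw [B_neg_left, B_sub_right, B_smul_right]
        have h1 : B m v' v = d := by rw [B_symm]; exact hvv'
        have h2 : B m v' (e₁ m) = 0 := by
          rw [B_symm, B_e₁]; exact hv'0 1
        rw [h1, h2]; ring
      have hb : B m (e₁ m) (v - d • e₁ m) = 0 := by
        rw [B_sub_right, B_smul_right, B_e₁, hv0 1, hBee]; ring
      rw [eichler, ha, hb]
      funext i
      simp only [Pi.sub_apply, Pi.add_apply, Pi.smul_apply, smul_eq_mul]
      ring
    simp only [Function.comp_apply]
    rw [step1, step2, step3]


end Stmt14
end
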